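/- Let f be meromorphic and non-constant on ℂ and let z(t) be a trajectory of ż = f(z) with maximal interval of definition (a₀, b₀) where b₀ < ∞. Then lim_{t→b₀⁻} z(t) exists in the Riemann sphere and is either ∞ or a pole of f. -/

import Mathlib

open scoped OnePoint

open Set Filter Metric


lemma aux_confine {f : ℂ → ℂ} {z : ℝ → ℂ} {z₀ : ℂ} {r M t₅ b₀ : ℝ}
    (hr : 0 < r) (hM : 0 < M)
    (hd : ∀ t ∈ Set.Ico t₅ b₀, HasDerivAt z (f (z t)) t)
    (hbound : ∀ w : ℂ, r/2 ≤ ‖w - z₀‖ → ‖w - z₀‖ ≤ r → ‖f w‖ ≤ M)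
    (hstart : ‖z t₅ - z₀‖ < r/2)
    (htime : M * (b₀ - t₅) < r/2) :
    ∀ t ∈ Set.Ico t₅ b₀, ‖z t - z₀‖ < r := by
  by_contra hcon
  push_neg at hcon
  obtain ⟨T, hT, hTr⟩ := hcon
  have hmem : ∀ {x : ℝ}, t₅ ≤ x → x ≤ T → x ∈ Ico t₅ b₀ := fun h1 h2 =>
    ⟨h1, lt_of_le_of_lt h2 hT.2⟩
  have zc : ContinuousOn z (Icc t₅ T) := fun s hs =>
    (hd s (hmem hs.1 hs.2)).continuousAt.continuousWithinAt
  have hclosed : IsClosed {w : ℂ | r ≤ ‖w - z₀‖} :=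
    isClosed_le continuous_const ((continuous_id.sub continuous_const).norm)
  have hclosed' : IsClosed {w : ℂ | ‖w - z₀‖ ≤ r/2} :=
    isClosed_le ((continuous_id.sub continuous_const).norm) continuous_const
  -- the first time `u` at which ‖z - z₀‖ reaches r
  set B : Set ℝ := Icc t₅ T ∩ z ⁻¹' {w : ℂ | r ≤ ‖w - z₀‖} with hBdef
  have hBc : IsClosed B := zc.preimage_isClosed_of_isClosed isClosed_Icc hclosed
  have hBne : B.Nonempty := ⟨T, ⟨hT.1, le_refl T⟩, hTr⟩
  have hBbd : BddBelow B := ⟨t₅, fun x hx => hx.1.1⟩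
  set u := sInf B with hudef
  have hu : u ∈ B := hBc.csInf_mem hBne hBbd
  have ht₅u : t₅ < u := by
    rcases lt_or_eq_of_le hu.1.1 with h | h
    · exact h
    · exfalso; rw [← h] at hu; have := hu.2; simp only [mem_preimage, mem_setOf_eq] at this; linarith
  have hless : ∀ t ∈ Ico t₅ u, ‖z t - z₀‖ < r := by
    intro t ht
    by_contra h
    push_neg at h
    have htB : t ∈ B := ⟨⟨ht.1, le_trans ht.2.le hu.1.2⟩, h⟩
    exact absurd (csInf_le hBbd htB) (not_le.2 ht.2)
  -- the last time `s` before `u` at which ‖z - z₀‖ ≤ r/2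
  set A : Set ℝ := Icc t₅ u ∩ z ⁻¹' {w : ℂ | ‖w - z₀‖ ≤ r/2} with hAdef
  have hAc : IsClosed A :=
    (zc.mono (Icc_subset_Icc_right hu.1.2)).preimage_isClosed_of_isClosed isClosed_Icc hclosed'
  have hAne : A.Nonempty := ⟨t₅, ⟨le_refl _, ht₅u.le⟩, hstart.le⟩
  have hAbd : BddAbove A := ⟨u, fun x hx => hx.1.2⟩
  set s := sSup A with hsdef
  have hs : s ∈ A := hAc.csSup_mem hAne hAbd
  have hsu : s < u := by
    rcases lt_or_eq_of_le hs.1.2 with h | h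
    · exact h
    · exfalso
      have h1 := hs.2; have h2 := hu.2
      simp only [mem_preimage, mem_setOf_eq] at h1 h2
      rw [h] at h1; linarith
  have hgt : ∀ t ∈ Ioc s u, r/2 < ‖z t - z₀‖ := by
    intro t ht
    by_contra h
    push_neg at h
    have htA : t ∈ A := ⟨⟨le_trans hs.1.1 ht.1.le, ht.2⟩, h⟩
    exact absurd (le_csSup hAbd htA) (not_le.2 ht.1)
  have hsmem : s ∈ Ico t₅ b₀ := hmem hs.1.1 (hs.1.2.trans hu.1.2)
  have humem : u ∈ Ico t₅ b₀ := hmem hu.1.1 hu.1.2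
  -- ‖z s - z₀‖ = r/2 (≥ by right-continuity)
  have hsge : r/2 ≤ ‖z s - z₀‖ := by
    have hczs : ContinuousAt (fun t => ‖z t - z₀‖) s :=
      (((hd s hsmem).continuousAt.sub continuousAt_const).norm)
    refine ge_of_tendsto (hczs.continuousWithinAt (s := Ioi s)) ?_
    filter_upwards [Ioc_mem_nhdsGT_of_mem ⟨le_refl s, hsu⟩] with t ht using (hgt t ht).le
  -- ‖z u - z₀‖ ≤ r by left-continuity
  have hule : ‖z u - z₀‖ ≤ r := by
    have hczu : ContinuousAt (fun t => ‖z t - z₀‖) u :=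
      (((hd u humem).continuousAt.sub continuousAt_const).norm)
    refine le_of_tendsto (hczu.continuousWithinAt (s := Iio u)) ?_
    filter_upwards [Ico_mem_nhdsLT_of_mem ⟨ht₅u, le_refl u⟩] with t ht using (hless t ht).le
  have hsub : Icc s u ⊆ Ico t₅ b₀ := fun x hx =>
    hmem (hs.1.1.trans hx.1) (hx.2.trans hu.1.2)
  have key : ‖z u - z s‖ ≤ M * ‖u - s‖ := by
    refine Convex.norm_image_sub_le_of_norm_hasDerivWithin_le
      (f' := fun t => f (z t)) (fun x hx => (hd x (hsub hx)).hasDerivWithinAt)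
      (fun x hx => ?_) (convex_Icc s u) ⟨le_refl s, hsu.le⟩ ⟨hsu.le, le_refl u⟩
    refine hbound _ ?_ ?_
    · rcases eq_or_lt_of_le hx.1 with h | h
      · rw [← h]; exact hsge
      · exact (hgt x ⟨h, hx.2⟩).le
    · rcases eq_or_lt_of_le hx.2 with h | h
      · rw [h]; exact hule
      · exact (hless x ⟨hsub hx |>.1, h⟩).le
  have hlow : r/2 ≤ ‖z u - z s‖ := by
    have h1 : r ≤ ‖z u - z₀‖ := hu.2
    have h2 : ‖z s - z₀‖ ≤ r/2 := hs.2
    have h3 : ‖z u - z₀‖ - ‖z s - z₀‖ ≤ ‖(z u - z₀) - (z s - z₀)‖ := norm_sub_norm_le _ _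
    have h4 : (z u - z₀) - (z s - z₀) = z u - z s := by ring
    rw [h4] at h3
    linarith
  have hup : M * ‖u - s‖ ≤ M * (b₀ - t₅) := by
    have h1 : ‖u - s‖ = u - s := by
      rw [Real.norm_eq_abs, abs_of_nonneg (by linarith)]
    rw [h1]
    have : u - s ≤ b₀ - t₅ := by
      have := humem.2; have := hs.1.1; linarith
    exact mul_le_mul_of_nonneg_left this hM.le
  linarith


lemma aux_leftDeriv {f : ℂ → ℂ} {z : ℝ → ℂ} {a₀ b₀ : ℝ} {L : ℂ}
    (hab : a₀ < b₀)
    (hz : ∀ t ∈ Set.Ioo a₀ b₀, HasDerivAt z (f (z t)) t)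
    (hlim : Filter.Tendsto z (nhdsWithin b₀ (Set.Iio b₀)) (nhds L))
    (hcont : ContinuousAt f L) :
    HasDerivWithinAt (fun t => if t < b₀ then z t else L) (f L) (Set.Iic b₀) b₀ := by
  set w : ℝ → ℂ := fun t => if t < b₀ then z t else L with hwdef
  have hwb : w b₀ = L := by simp [hwdef]
  have hwz : ∀ t ∈ Iio b₀, w t = z t := fun t ht => if_pos ht
  -- continuity of w within Iic b₀ at b₀
  have hTw : Tendsto w (nhdsWithin b₀ (Iic b₀)) (nhds L) := by
    have h1 : Tendsto w (nhdsWithin b₀ (Iio b₀)) (nhds L) := by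
      refine hlim.congr' ?_
      filter_upwards [self_mem_nhdsWithin] with t ht using (hwz t ht).symm
    have h2 : Tendsto w (nhdsWithin b₀ {b₀}) (nhds L) := by
      rw [nhdsWithin_singleton]
      rw [tendsto_pure_left]
      intro s hs
      rw [hwb]; exact mem_of_mem_nhds hs
    have : nhdsWithin b₀ (Iic b₀) = nhdsWithin b₀ (Iio b₀) ⊔ nhdsWithin b₀ {b₀} := by
      rw [← nhdsWithin_union, Set.Iio_union_right]
    rw [this]
    exact h1.sup h2
  rw [hasDerivWithinAt_iff_isLittleO, Asymptotics.isLittleO_iff]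
  intro ε hε
  -- choose c with ‖f (z t) - f L‖ ≤ ε on (c, b₀)
  have hev : ∀ᶠ t in nhdsWithin b₀ (Iio b₀), ‖f (z t) - f L‖ ≤ ε := by
    have := (hcont.tendsto.comp hlim) (Metric.closedBall_mem_nhds (f L) hε)
    filter_upwards [this] with t ht
    rw [← dist_eq_norm]
    exact ht
  obtain ⟨c, hc, hcsub⟩ := mem_nhdsLT_iff_exists_Ioo_subset.mp hev
  set c' := max c a₀ with hc'def
  have hc' : c' < b₀ := max_lt hc hab
  have hsub1 : Ioo c' b₀ ⊆ Ioo a₀ b₀ := fun x hx => ⟨lt_of_le_of_lt (le_max_right _ _) hx.1, hx.2⟩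
  have hsub2 : ∀ t ∈ Ioo c' b₀, ‖f (z t) - f L‖ ≤ ε := fun t ht =>
    hcsub ⟨lt_of_le_of_lt (le_max_left _ _) ht.1, ht.2⟩
  -- the main estimate for each t ∈ Ioc c' b₀
  have main : ∀ t ∈ Ioc c' b₀, ‖w t - w b₀ - (t - b₀) • f L‖ ≤ ε * ‖t - b₀‖ := by
    intro t ht
    rcases eq_or_lt_of_le ht.2 with heq | hlt
    · subst heq; simp
    -- Grönwall on [t, b₀] with g s = w s - s • f L - (w t - t • f L)
    have hwc : ContinuousOn w (Icc t b₀) := by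
      intro s hs
      rcases eq_or_lt_of_le hs.2 with h | h
      · subst h
        rw [ContinuousWithinAt, hwb]
        exact hTw.mono_left (nhdsWithin_mono _ Icc_subset_Iic_self)
      · have hsmem : s ∈ Ioo a₀ b₀ :=
          ⟨lt_of_le_of_lt (le_max_right c a₀) (lt_of_lt_of_le ht.1 hs.1), h⟩
        have : ContinuousAt w s := by
          refine (hz s hsmem).continuousAt.congr ?_
          filter_upwards [Iio_mem_nhds h] with x hx using (hwz x hx).symm
        exact this.continuousWithinAt
    have hwd : ∀ s ∈ Ico t b₀, HasDerivWithinAt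
        (fun s => (w s - s • f L) - (w t - t • f L)) (f (z s) - f L) (Ici s) s := by
      intro s hs
      have hsmem : s ∈ Ioo a₀ b₀ :=
        ⟨lt_of_lt_of_le (lt_of_le_of_lt (le_max_right c a₀) ht.1) hs.1, hs.2⟩
      have hw : HasDerivAt w (f (z s)) s := by
        refine (hz s hsmem).congr_of_eventuallyEq ?_
        filter_upwards [Iio_mem_nhds hs.2] with x hx using hwz x hx
      have hsm : HasDerivAt (fun x : ℝ => x • f L) (f L) s := by
        simpa using (hasDerivAt_id s).smul_const (f L)
      exact ((hw.sub hsm).sub_const _).hasDerivWithinAt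
    have hgr := norm_le_gronwallBound_of_norm_deriv_right_le
      (f := fun s => (w s - s • f L) - (w t - t • f L))
      (f' := fun s => f (z s) - f L) (δ := 0) (K := 0) (ε := ε) (a := t) (b := b₀)
      (((hwc.sub ((continuous_id.smul continuous_const).continuousOn)).sub continuousOn_const))
      hwd (by simp) ?_ b₀ ⟨hlt.le, le_refl _⟩
    · rw [gronwallBound_K0] at hgr
      simp only [zero_add] at hgr
      have hexp : (w b₀ - b₀ • f L) - (w t - t • f L) = -(w t - w b₀ - (t - b₀) • f L) := by
        rw [sub_smul]; ring
      rw [hexp, norm_neg] at hgr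
      have : ‖t - b₀‖ = b₀ - t := by
        rw [Real.norm_eq_abs, abs_of_nonpos (by linarith)]; ring
      rw [this]
      exact hgr
    · intro s hs
      rw [zero_mul, zero_add]
      exact hsub2 s ⟨lt_of_lt_of_le ht.1 hs.1, hs.2⟩
  filter_upwards [Ioc_mem_nhdsLE_of_mem ⟨hc', le_refl b₀⟩] with t ht
  exact main t ht



/-- Let `f` be meromorphic and non-constant on `ℂ` and let `z(t)` be a trajectory of
`ż = f(z)` with maximal interval of definition `(a₀, b₀)`, `b₀ < ∞`. Then
`lim_{t → b₀⁻} z(t)` exists in the Riemann sphere and is either `∞` or a pole of `f`. -/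
theorem stmt3 (f : ℂ → ℂ) (hf : MeromorphicOn f Set.univ)
    (hnc : ¬ ∃ c : ℂ, ∀ w : ℂ, AnalyticAt ℂ f w → f w = c)
    (z : ℝ → ℂ) (a₀ b₀ : ℝ) (hab : a₀ < b₀)
    (hz : ∀ t ∈ Set.Ioo a₀ b₀, HasDerivAt z (f (z t)) t)
    (hmax : ¬ ∃ (b₁ : ℝ) (w : ℝ → ℂ), b₀ < b₁ ∧
      (∀ t ∈ Set.Ioo a₀ b₁, HasDerivAt w (f (w t)) t) ∧
      (∀ t ∈ Set.Ioo a₀ b₀, w t = z t)) :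
    Filter.Tendsto (fun t => ((z t : ℂ) : OnePoint ℂ)) (nhdsWithin b₀ (Set.Iio b₀))
        (nhds (∞ : OnePoint ℂ)) ∨
      ∃ z₀ : ℂ, (¬ AnalyticAt ℂ f z₀) ∧
        Filter.Tendsto z (nhdsWithin b₀ (Set.Iio b₀)) (nhds z₀) := by
  set l := nhdsWithin b₀ (Set.Iio b₀) with hldef
  have hIoo : Ioo a₀ b₀ ∈ l := Ioo_mem_nhdsLT_of_mem ⟨hab, le_refl b₀⟩
  by_cases H : Filter.Tendsto z l (cocompact ℂ)
  · left
    have H' : Filter.Tendsto z l (Filter.coclosedCompact ℂ) := by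
      rwa [Filter.coclosedCompact_eq_cocompact]
    exact (OnePoint.tendsto_coe_infty (X := ℂ)).comp H'
  · -- there is a finite cluster point z₀
    rw [hasBasis_cocompact.tendsto_right_iff] at H
    push_neg at H
    obtain ⟨K, hK, hfreq⟩ := H
    have hfreq' : ∃ᶠ t in l, z t ∈ K := by
      refine hfreq.mono fun t ht => ?_
      simpa using ht
    have h1 : (l ⊓ 𝓟 (z ⁻¹' K)).NeBot := frequently_iff_neBot.mp hfreq'
    have hle : Filter.map z (l ⊓ 𝓟 (z ⁻¹' K)) ≤ Filter.map z l ⊓ 𝓟 K := by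
      refine le_inf (map_mono inf_le_left) ?_
      refine le_trans (map_mono inf_le_right) ?_
      rw [map_principal]
      exact principal_mono.mpr (image_preimage_subset _ _)
    haveI := Filter.map_neBot (f := l ⊓ 𝓟 (z ⁻¹' K)) (m := z)
    haveI : (Filter.map z l ⊓ 𝓟 K).NeBot := Filter.neBot_of_le hle
    obtain ⟨z₀, hz₀K, hcl⟩ := hK.exists_clusterPt (f := Filter.map z l ⊓ 𝓟 K) inf_le_right
    have hcl' : ClusterPt z₀ (Filter.map z l) := hcl.mono inf_le_left
    have hfq : ∀ V ∈ nhds z₀, ∃ᶠ t in l, z t ∈ V := by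
      intro V hV
      exact (mapClusterPt_iff_frequently.mp hcl') V hV
    by_cases hA : AnalyticAt ℂ f z₀
    · -- the analytic case: we can extend the solution past b₀, contradiction
      exfalso
      -- a ball around z₀ where f is analytic and bounded
      have hball : ∀ᶠ w in nhds z₀, AnalyticAt ℂ f w ∧ ‖f w‖ ≤ ‖f z₀‖ + 1 := by
        refine hA.eventually_analyticAt.and ?_
        have := hA.continuousAt.norm
        have h2 := this.eventually_le_const (show ‖f z₀‖ < ‖f z₀‖ + 1 by linarith)
        exact h2
      rw [Metric.eventually_nhds_iff] at hball
      obtain ⟨r₁, hr₁, hball⟩ := hball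
      set r := r₁ / 2 with hrdef
      have hr : 0 < r := by positivity
      set M := ‖f z₀‖ + 1 with hMdef
      have hM : 0 < M := by positivity
      -- choose a good starting time t₅
      have E2 : ∀ᶠ t in l, M * (b₀ - t) < r / 2 := by
        have hT : Tendsto (fun t : ℝ => M * (b₀ - t)) l (nhds 0) := by
          have : Tendsto (fun t : ℝ => M * (b₀ - t)) (nhds b₀) (nhds (M * (b₀ - b₀))) :=
            (continuous_const.mul (continuous_const.sub continuous_id)).tendsto b₀
          rw [sub_self, mul_zero] at this
          exact this.mono_left nhdsWithin_le_nhds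
        exact hT.eventually_lt_const (by positivity)
      have E1 : ∀ᶠ t in l, t ∈ Ioo a₀ b₀ := hIoo
      obtain ⟨t₅, h5ball, h5I, h5time⟩ :=
        ((hfq _ (Metric.ball_mem_nhds z₀ (by positivity : (0:ℝ) < r / 2))).and_eventually
          (E1.and E2)).exists
      rw [mem_ball, dist_eq_norm] at h5ball
      -- confinement
      have hrr₁ : r < r₁ := by rw [hrdef]; linarith
      have hbnd : ∀ w : ℂ, r/2 ≤ ‖w - z₀‖ → ‖w - z₀‖ ≤ r → ‖f w‖ ≤ M := by
        intro w hw1 hw2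
        have hd : dist w z₀ < r₁ := by rw [dist_eq_norm]; linarith
        exact (hball hd).2
      have hconf := aux_confine hr hM
        (fun t ht => hz t ⟨lt_of_lt_of_le h5I.1 ht.1, ht.2⟩) hbnd h5ball h5time
      -- Lipschitz on Ico t₅ b₀
      have hlip : ∀ s ∈ Ico t₅ b₀, ∀ s' ∈ Ico t₅ b₀, ‖z s' - z s‖ ≤ M * ‖s' - s‖ := by
        intro s hs s' hs'
        refine Convex.norm_image_sub_le_of_norm_hasDerivWithin_le
          (f' := fun t => f (z t))
          (fun x hx => (hz x ⟨lt_of_lt_of_le h5I.1 hx.1, hx.2⟩).hasDerivWithinAt)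
          (fun x hx => ?_) (convex_Ico t₅ b₀) hs hs'
        have hd : dist (z x) z₀ < r₁ := by
          rw [dist_eq_norm]; linarith [hconf x hx]
        exact (hball hd).2
      -- Cauchy, hence z has a limit L at b₀⁻
      have hcauchy : Cauchy (Filter.map z l) := by
        rw [Metric.cauchy_iff]
        refine ⟨map_neBot, fun δ hδ => ?_⟩
        set d := δ / (M + 1) with hddef
        have hd : 0 < d := by positivity
        refine ⟨z '' Ioo (max t₅ (b₀ - d)) b₀, ?_, ?_⟩
        · exact image_mem_map (Ioo_mem_nhdsLT_of_mem
            ⟨max_lt h5I.2 (by linarith), le_refl b₀⟩)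
        · rintro x ⟨s, hs, rfl⟩ y ⟨s', hs', rfl⟩
          have hsI : s ∈ Ico t₅ b₀ := ⟨le_trans (le_max_left _ _) hs.1.le, hs.2⟩
          have hs'I : s' ∈ Ico t₅ b₀ := ⟨le_trans (le_max_left _ _) hs'.1.le, hs'.2⟩
          have h1 : ‖s - s'‖ ≤ d := by
            rw [Real.norm_eq_abs, abs_sub_le_iff]
            have := hs.1; have := hs'.1
            have h2 : b₀ - d < s := lt_of_le_of_lt (le_max_right _ _) hs.1
            have h3 : b₀ - d < s' := lt_of_le_of_lt (le_max_right _ _) hs'.1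
            constructor <;> linarith [hs.2, hs'.2]
          calc dist (z s) (z s') = ‖z s - z s'‖ := dist_eq_norm _ _
            _ ≤ M * ‖s - s'‖ := hlip s' hs'I s hsI
            _ ≤ M * d := mul_le_mul_of_nonneg_left h1 hM.le
            _ < (M + 1) * d := by nlinarith
            _ = δ := by
              rw [hddef, mul_comm, div_mul_cancel₀ _ (by positivity : (0:ℝ) < M+1).ne']
      obtain ⟨L, hL⟩ := CompleteSpace.complete hcauchy
      have hlim : Tendsto z l (nhds L) := hL
      -- L is in the closed ball, so f is analytic at L
      have hLmem : L ∈ closedBall z₀ r := by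
        refine IsClosed.mem_of_tendsto Metric.isClosed_closedBall hlim ?_
        filter_upwards [Ioo_mem_nhdsLT_of_mem ⟨h5I.2, le_refl b₀⟩] with t ht
        rw [mem_closedBall, dist_eq_norm]
        exact (hconf t ⟨ht.1.le, ht.2⟩).le
      have hAL : AnalyticAt ℂ f L := by
        have hd : dist L z₀ < r₁ := lt_of_le_of_lt (mem_closedBall.mp hLmem) hrr₁
        exact (hball hd).1
      -- local solution through (b₀, L)
      have hC : ContDiffAt ℝ 1 f L := hAL.contDiffAt.restrict_scalars ℝ
      obtain ⟨y, hy0, ε, hε, hy⟩ := ContDiffAt.exists_forall_mem_closedBall_exists_eq_forall_mem_Ioo_hasDerivAt₀ hC b₀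
      set w : ℝ → ℂ := fun t => if t < b₀ then z t else y t with hwdef
      have hwb : w b₀ = L := by simp [hwdef, hy0]
      apply hmax
      refine ⟨b₀ + ε, w, by linarith, ?_, fun t ht => if_pos ht.2⟩
      intro t ht
      rcases lt_trichotomy t b₀ with h | h | h
      · have hev : w =ᶠ[nhds t] z := by
          filter_upwards [Iio_mem_nhds h] with s hs using if_pos hs
        have hder := (hz t ⟨ht.1, h⟩).congr_of_eventuallyEq hev
        have hwt : w t = z t := if_pos h
        rw [hwt]
        exact hder
      · subst h
        have hL' : HasDerivWithinAt w (f L) (Iic t) t := by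
          have h0 := aux_leftDeriv hab hz hlim hAL.continuousAt
          refine h0.congr (fun s hs => ?_) ?_
          · rcases lt_or_eq_of_le (mem_Iic.mp hs) with h | h
            · simp [hwdef, if_pos h]
            · subst h; simp [hwdef, hy0]
          · simp [hwdef, hy0]
        have hR : HasDerivWithinAt w (f L) (Ici t) t := by
          have hyb : HasDerivAt y (f (y t)) t := hy t ⟨by linarith, by linarith⟩
          rw [hy0] at hyb
          refine hyb.hasDerivWithinAt.congr (fun s hs => ?_) ?_
          · exact if_neg (not_lt.2 (mem_Ici.mp hs))
          · exact if_neg (lt_irrefl t)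
        have hcomb := hL'.union hR
        rw [Iic_union_Ici] at hcomb
        rw [hwb]
        exact hasDerivWithinAt_univ.mp hcomb
      · have hev : w =ᶠ[nhds t] y := by
          filter_upwards [Ioi_mem_nhds h] with s hs using if_neg (not_lt.2 (le_of_lt hs))
        have hder := (hy t ⟨by linarith, ht.2⟩).congr_of_eventuallyEq hev
        have hwt : w t = y t := if_neg (not_lt.2 h.le)
        rw [hwt]
        exact hder
    · -- the pole case : z tends to z₀
      right
      refine ⟨z₀, hA, ?_⟩
      have hm : MeromorphicAt f z₀ := hf z₀ (Set.mem_univ _)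
      have hev := hm.eventually_analyticAt
      rw [eventually_nhdsWithin_iff, Metric.eventually_nhds_iff] at hev
      obtain ⟨r₀, hr₀, hball⟩ := hev
      rw [Metric.tendsto_nhds]
      intro ε hε
      set r := min ε r₀ / 2 with hrdef
      have hr : 0 < r := by positivity
      have hrε : r < ε := by
        have h1 : min ε r₀ ≤ ε := min_le_left _ _
        rw [hrdef]; linarith
      have hrr₀ : r < r₀ := by
        have h1 : min ε r₀ ≤ r₀ := min_le_right _ _
        rw [hrdef]; linarith
      -- bound for f on the annulus r/2 ≤ ‖w - z₀‖ ≤ r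
      have hannc : IsCompact (closedBall z₀ r \ ball z₀ (r/2)) :=
        (isCompact_closedBall z₀ r).diff isOpen_ball
      have hfc : ContinuousOn f (closedBall z₀ r \ ball z₀ (r/2)) := by
        intro w hw
        have h1 : dist w z₀ < r₀ := lt_of_le_of_lt (mem_closedBall.mp hw.1) hrr₀
        have h2 : w ≠ z₀ := by
          intro h
          exact hw.2 (by rw [h]; exact mem_ball_self (by positivity))
        exact ((hball h1 (Set.mem_compl_singleton_iff.mpr h2)).continuousAt).continuousWithinAt
      obtain ⟨C, hC⟩ := hannc.exists_bound_of_continuousOn hfc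
      set M := max C 1 with hMdef
      have hM : 0 < M := lt_of_lt_of_le one_pos (le_max_right _ _)
      have hbnd : ∀ w : ℂ, r/2 ≤ ‖w - z₀‖ → ‖w - z₀‖ ≤ r → ‖f w‖ ≤ M := by
        intro w h1 h2
        have hw : w ∈ closedBall z₀ r \ ball z₀ (r/2) := by
          constructor
          · rw [mem_closedBall, dist_eq_norm]; exact h2
          · simp only [mem_ball, dist_eq_norm, not_lt]; exact h1
        exact le_trans (hC w hw) (le_max_left _ _)
      have E2 : ∀ᶠ t in l, M * (b₀ - t) < r / 2 := by
        have hT : Tendsto (fun t : ℝ => M * (b₀ - t)) l (nhds 0) := by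
          have h3 : Tendsto (fun t : ℝ => M * (b₀ - t)) (nhds b₀) (nhds (M * (b₀ - b₀))) :=
            (continuous_const.mul (continuous_const.sub continuous_id)).tendsto b₀
          rw [sub_self, mul_zero] at h3
          exact h3.mono_left nhdsWithin_le_nhds
        exact hT.eventually_lt_const (by positivity)
      have E1 : ∀ᶠ t in l, t ∈ Ioo a₀ b₀ := hIoo
      obtain ⟨t₅, h5ball, h5I, h5time⟩ :=
        ((hfq _ (Metric.ball_mem_nhds z₀ (by positivity : (0:ℝ) < r / 2))).and_eventually
          (E1.and E2)).exists
      rw [mem_ball, dist_eq_norm] at h5ball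
      have hconf := aux_confine hr hM
        (fun t ht => hz t ⟨lt_of_lt_of_le h5I.1 ht.1, ht.2⟩) hbnd h5ball h5time
      filter_upwards [Ioo_mem_nhdsLT_of_mem ⟨h5I.2, le_refl b₀⟩] with t ht
      rw [dist_eq_norm]
      exact lt_trans (hconf t ⟨ht.1.le, ht.2⟩) hrε
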